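/- Let G be a connected graph of order n ≥ 3 with γ_R(G) = γ(G) + 1. Then b_R(G) ≤ b(G), where b(G) is the bondage number. -/

import Mathlib

open SimpleGraph Finset

/-- A Roman dominating function: values in {0,1,2}, every 0-vertex has a neighbor with value 2. -/
def IsRDF {V : Type*} (G : SimpleGraph V) (f : V → ℕ) : Prop :=
  (∀ v, f v ≤ 2) ∧ ∀ v, f v = 0 → ∃ u, G.Adj v u ∧ f u = 2

/-- The Roman domination number: minimum weight of a Roman dominating function. -/
noncomputable def romanDom {V : Type*} [Fintype V] (G : SimpleGraph V) : ℕ :=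
  sInf {k | ∃ f : V → ℕ, IsRDF G f ∧ ∑ v, f v = k}

/-- A dominating set. -/
def IsDomSet {V : Type*} (G : SimpleGraph V) (S : Set V) : Prop :=
  ∀ v, v ∈ S ∨ ∃ u ∈ S, G.Adj u v

/-- The domination number. -/
noncomputable def domNum {V : Type*} [Fintype V] (G : SimpleGraph V) : ℕ :=
  sInf {k | ∃ S : Set V, IsDomSet G S ∧ S.ncard = k}

/-- Degree of a vertex. -/
noncomputable def deg {V : Type*} (G : SimpleGraph V) (v : V) : ℕ :=
  (G.neighborSet v).ncard

/-- Maximum degree. -/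
noncomputable def maxDeg {V : Type*} (G : SimpleGraph V) : ℕ :=
  sSup {d | ∃ v, deg G v = d}

/-- Minimum degree. -/
noncomputable def minDeg {V : Type*} (G : SimpleGraph V) : ℕ :=
  sInf {d | ∃ v, deg G v = d}

/-- The Roman bondage number: minimum size of an edge set whose deletion increases `romanDom`. -/
noncomputable def romanBondage {V : Type*} [Fintype V] (G : SimpleGraph V) : ℕ :=
  sInf {k | ∃ B : Set (Sym2 V), B ⊆ G.edgeSet ∧
    romanDom (G.deleteEdges B) > romanDom G ∧ B.ncard = k}

/-- The bondage number: minimum size of an edge set whose deletion increases `domNum`. -/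
noncomputable def bondage {V : Type*} [Fintype V] (G : SimpleGraph V) : ℕ :=
  sInf {k | ∃ B : Set (Sym2 V), B ⊆ G.edgeSet ∧
    domNum (G.deleteEdges B) > domNum G ∧ B.ncard = k}

/-- A vertex cover. -/
def IsVC {V : Type*} (G : SimpleGraph V) (S : Set V) : Prop :=
  ∀ u v, G.Adj u v → u ∈ S ∨ v ∈ S

/-- The vertex covering number. -/
noncomputable def vcNum {V : Type*} [Fintype V] (G : SimpleGraph V) : ℕ :=
  sInf {k | ∃ S : Set V, IsVC G S ∧ S.ncard = k}

lemma walk_stay {V : Type*} {G : SimpleGraph V}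
    (h : ∀ v, (G.neighborSet v).Subsingleton) :
    ∀ {a x : V}, G.Walk a x → ∀ {b : V}, G.Adj a b → x = a ∨ x = b := by
  intro a x p
  induction p with
  | nil => intro b _; exact Or.inl rfl
  | @cons a v x h' q ih =>
    intro b hab
    have hvb : v = b := h a h' hab
    subst hvb
    rcases ih hab.symm with h1 | h1
    · exact Or.inr h1
    · exact Or.inl h1

lemma exists_deg2 {V : Type*} [Fintype V] (G : SimpleGraph V)
    (hconn : G.Connected) (hn : 3 ≤ Fintype.card V) :
    ∃ x a b : V, a ≠ b ∧ G.Adj x a ∧ G.Adj x b := by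
  classical
  by_contra hc
  push_neg at hc
  have hsub : ∀ v, (G.neighborSet v).Subsingleton := by
    intro v y hy z hz
    by_contra hne
    exact hc v y z hne hy hz
  -- every vertex has a neighbor
  obtain ⟨a⟩ := hconn.nonempty
  obtain ⟨c, hca⟩ : ∃ c : V, c ≠ a := by
    have : 1 < Fintype.card V := by omega
    exact Fintype.exists_ne_of_one_lt_card this a
  obtain ⟨w⟩ := hconn.preconnected a c
  obtain ⟨b, hab⟩ : ∃ b, G.Adj a b := by
    cases w with
    | nil => exact absurd rfl hca.symm
    | cons h' q => exact ⟨_, h'⟩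
  obtain ⟨d, hd⟩ : ∃ d : V, d ∉ ({a, b} : Finset V) := by
    by_contra hall
    push_neg at hall
    have : (Finset.univ : Finset V) ⊆ {a, b} := fun x _ => hall x
    have := Finset.card_le_card this
    simp only [Finset.card_univ] at this
    have h2 : ({a, b} : Finset V).card ≤ 2 := Finset.card_insert_le _ _ |>.trans (by simp)
    omega
  obtain ⟨w'⟩ := hconn.preconnected a d
  rcases walk_stay hsub w' hab with h1 | h1 <;> simp [h1] at hd

lemma domNum_le_ncard {V : Type*} [Fintype V] {G : SimpleGraph V} {S : Set V}
    (hS : IsDomSet G S) : domNum G ≤ S.ncard :=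
  Nat.sInf_le ⟨S, hS, rfl⟩

lemma domNum_add_two_le {V : Type*} [Fintype V] (G : SimpleGraph V)
    (hconn : G.Connected) (hn : 3 ≤ Fintype.card V) :
    domNum G + 2 ≤ Fintype.card V := by
  obtain ⟨x, a, b, hab, hxa, hxb⟩ := exists_deg2 G hconn hn
  set S : Set V := Set.univ \ {a, b} with hSdef
  have hdom : IsDomSet G S := by
    intro v
    by_cases hv : v ∈ S
    · exact Or.inl hv
    · refine Or.inr ⟨x, ⟨Set.mem_univ x, ?_⟩, ?_⟩
      · rintro (h | h)
        · exact hxa.ne h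
        · exact hxb.ne h
      · have : v ∈ ({a, b} : Set V) := by
          by_contra h
          exact hv ⟨Set.mem_univ v, h⟩
        rcases this with h | h
        · exact h ▸ hxa
        · exact h ▸ hxb
  have hcard : S.ncard = Fintype.card V - 2 := by
    rw [hSdef, Set.ncard_diff (Set.subset_univ _), Set.ncard_univ, Set.ncard_pair hab,
      Nat.card_eq_fintype_card]
  have := domNum_le_ncard hdom
  omega

lemma rdf_bound {V : Type*} [Fintype V] (H : SimpleGraph V) {f : V → ℕ}
    (hf : IsRDF H f) :
    Fintype.card V ≤ ∑ v, f v ∨ domNum H + 1 ≤ ∑ v, f v := by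
  classical
  by_cases h2 : ∃ v, f v = 2
  · right
    set S : Finset V := Finset.univ.filter (fun v => f v ≠ 0) with hSdef
    have hdom : IsDomSet H ↑S := by
      intro v
      by_cases hv : f v = 0
      · obtain ⟨u, hadj, hu⟩ := hf.2 v hv
        exact Or.inr ⟨u, by simp [hSdef, hu], hadj.symm⟩
      · exact Or.inl (by simp [hSdef, hv])
    have h1 : domNum H ≤ S.card := by
      have := domNum_le_ncard hdom
      rwa [Set.ncard_coe_finset] at this
    obtain ⟨w, hw⟩ := h2
    have hwS : w ∈ S := by simp [hSdef, hw]
    have hlt : S.card < ∑ v ∈ S, f v := by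
      have : ∑ _v ∈ S, 1 < ∑ v ∈ S, f v := by
        apply Finset.sum_lt_sum
        · intro i hi
          simp only [hSdef, Finset.mem_filter] at hi
          omega
        · exact ⟨w, hwS, by omega⟩
      simpa using this
    have hle : ∑ v ∈ S, f v ≤ ∑ v, f v :=
      Finset.sum_le_sum_of_subset (Finset.subset_univ S)
    omega
  · left
    push_neg at h2
    have h1 : ∀ v, 1 ≤ f v := by
      intro v
      rcases Nat.eq_zero_or_pos (f v) with h | h
      · obtain ⟨u, _, hu⟩ := hf.2 v h
        exact absurd hu (h2 u)
      · exact h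
    calc Fintype.card V = ∑ _v : V, 1 := by simp
      _ ≤ ∑ v, f v := Finset.sum_le_sum fun v _ => h1 v

lemma romanDom_lower {V : Type*} [Fintype V] (H : SimpleGraph V) {m : ℕ}
    (hdom : m + 1 ≤ domNum H) (hcard : m + 2 ≤ Fintype.card V) :
    m + 2 ≤ romanDom H := by
  apply le_csInf
  · exact ⟨∑ v : V, 2, fun _ => 2, ⟨fun _ => le_refl 2, fun v h => by simp at h⟩, rfl⟩
  · rintro w ⟨f, hf, rfl⟩
    rcases rdf_bound H hf with h | h
    · exact le_trans hcard h
    · exact le_trans (by omega : m + 2 ≤ domNum H + 1) h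

theorem stmt8 {V : Type*} [Fintype V] (G : SimpleGraph V)
    (hconn : G.Connected) (hn : 3 ≤ Fintype.card V)
    (hγ : romanDom G = domNum G + 1) :
    romanBondage G ≤ bondage G := by
  classical
  have hcard : domNum G + 2 ≤ Fintype.card V := domNum_add_two_le G hconn hn
  -- the bondage set is nonempty (delete all edges)
  have hne : {k | ∃ B : Set (Sym2 V), B ⊆ G.edgeSet ∧
      domNum (G.deleteEdges B) > domNum G ∧ B.ncard = k}.Nonempty := by
    refine ⟨G.edgeSet.ncard, G.edgeSet, subset_refl _, ?_, rfl⟩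
    have hlow : Fintype.card V ≤ domNum (G.deleteEdges G.edgeSet) := by
      apply le_csInf
      · exact ⟨Fintype.card V, Set.univ, fun v => Or.inl (Set.mem_univ v), by
          rw [Set.ncard_univ, Nat.card_eq_fintype_card]⟩
      · rintro k ⟨S, hS, rfl⟩
        have hSuniv : S = Set.univ := by
          ext v
          simp only [Set.mem_univ, iff_true]
          rcases hS v with h | ⟨u, _, hadj⟩
          · exact h
          · rw [SimpleGraph.deleteEdges_adj] at hadj
            exact absurd (G.mem_edgeSet.mpr hadj.1) hadj.2
        rw [hSuniv, Set.ncard_univ, Nat.card_eq_fintype_card]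
    omega
  have hmem := Nat.sInf_mem hne
  obtain ⟨B, hBsub, hBdom, hBcard⟩ := hmem
  apply Nat.sInf_le
  refine ⟨B, hBsub, ?_, hBcard⟩
  have : domNum G + 2 ≤ romanDom (G.deleteEdges B) :=
    romanDom_lower _ (by omega) hcard
  omega
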